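/- Let A be a non-degenerate evolution algebra and H a hereditary and saturated subset of the vertex set of its associated graph. Then the ideal I_H = span(H) has the absorption property. -/

import Mathlib

variable {K ι A : Type*}

section Defs
variable [Field K] [NonUnitalNonAssocCommRing A] [Module K A]
  [SMulCommClass K A A] [IsScalarTower K A A]

/-- A natural basis: distinct basis elements multiply to zero. -/
def IsNaturalBasis (b : Module.Basis ι K A) : Prop := ∀ i j : ι, i ≠ j → b i * b j = 0

/-- Edge i → j in the associated graph: the j-th coordinate of (b i)² is nonzero. -/
def EvolEdge (b : Module.Basis ι K A) (i j : ι) : Prop := b.repr (b i * b i) j ≠ 0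

/-- Hereditary subset of vertices: closed under edges (hence under reachability). -/
def EvolHereditary (b : Module.Basis ι K A) (H : Set ι) : Prop :=
  ∀ i ∈ H, ∀ j, EvolEdge b i j → j ∈ H

/-- Saturated subset: a regular vertex all of whose edge-targets lie in H belongs to H. -/
def EvolSaturated (b : Module.Basis ι K A) (H : Set ι) : Prop :=
  ∀ i : ι, b i * b i ≠ 0 → (∀ j, EvolEdge b i j → j ∈ H) → i ∈ H

/-- Ideal of a (nonunital, nonassociative, commutative) algebra: a submodule absorbing
multiplication. -/
def IsEvolIdeal (I : Submodule K A) : Prop := ∀ a : A, ∀ x ∈ I, a * x ∈ I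

/-- I_H, the span of the basis elements indexed by H. -/
def idealOf (b : Module.Basis ι K A) (H : Set ι) : Submodule K A := Submodule.span K (b '' H)

/-- H_I = {e ∈ B : e² ∈ I}. -/
def hSet (b : Module.Basis ι K A) (I : Submodule K A) : Set ι := {i | b i * b i ∈ I}

/-- Maximal ideal. -/
def IsMaxIdeal (I : Submodule K A) : Prop :=
  IsEvolIdeal I ∧ I ≠ ⊤ ∧
    ∀ J : Submodule K A, IsEvolIdeal J → I ≤ J → J = I ∨ J = ⊤

/-- Absorption property of an ideal. -/
def Absorption (I : Submodule K A) : Prop := ∀ x : A, (∀ a : A, x * a ∈ I) → x ∈ I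

end Defs

/-- A², the span of all products. -/
def sqIdeal (K A : Type*) [Field K] [NonUnitalNonAssocCommRing A] [Module K A] :
    Submodule K A :=
  Submodule.span K {x : A | ∃ a c : A, x = a * c}

variable [Field K] [NonUnitalNonAssocCommRing A] [Module K A]
  [SMulCommClass K A A] [IsScalarTower K A A]

lemma mul_basis_eq (b : Module.Basis ι K A) (hb : IsNaturalBasis b) (x : A) (i : ι) :
    x * b i = b.repr x i • (b i * b i) := by
  conv_lhs => rw [← b.linearCombination_repr x, Finsupp.linearCombination_apply]
  rw [Finsupp.sum, Finset.sum_mul]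
  rw [Finset.sum_eq_single i]
  · rw [smul_mul_assoc]
  · intro j _ hj
    rw [smul_mul_assoc, hb j i hj, smul_zero]
  · intro h
    rw [Finsupp.notMem_support_iff.mp h, zero_smul, zero_mul]

theorem stmt16 (b : Module.Basis ι K A) (hb : IsNaturalBasis b)
    (hnd : ∀ i : ι, b i * b i ≠ 0) (H : Set ι)
    (hH : EvolHereditary b H) (hs : EvolSaturated b H) :
    Absorption (idealOf b H) := by
  intro x hx
  rw [idealOf, Module.Basis.mem_span_image]
  intro i hi
  simp only [Finset.mem_coe, Finsupp.mem_support_iff] at hi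
  have h1 : x * b i ∈ idealOf b H := hx (b i)
  rw [mul_basis_eq b hb] at h1
  have h2 : b i * b i ∈ idealOf b H := by
    have := (idealOf b H).smul_mem (b.repr x i)⁻¹ h1
    rwa [inv_smul_smul₀ hi] at this
  rw [idealOf, Module.Basis.mem_span_image] at h2
  exact hs i (hnd i) fun j hj => h2 (Finsupp.mem_support_iff.mpr hj)
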